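/- Let H ∈ (0,1) with H ≠ 1/2 and T > 0. Define, for 0 < h ≤ t ≤ T − h, Q(t,h) := (4 − 2^{2H}) h^{2H} − 2^{2H−1}(t+h)^{2H} − 3·2^{2H} t^{2H} − 2^{2H−1}(t−h)^{2H} + 2(2t+h)^{2H} + 2(2t−h)^{2H} (this equals E[(S^H_{t+h} − 2S^H_t + S^H_{t−h})²] for the sub-fractional Brownian motion S^H). Then liminf_{h→0+} sup_{h≤t≤T−h} | Q(t,h)/h^{2H} − (4 − 2^{2H}) | > 0; in particular it is not the case that sup_{h≤t≤T−h} |Q(t,h)/h^{2H} − (4 − 2^{2H})| → 0 as h → 0+. -/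

import Mathlib

open Real Set Filter

/-- `Q(t,h) = E[(S^H_{t+h} − 2S^H_t + S^H_{t−h})²]` for sub-fractional Brownian motion. -/
noncomputable def subfBmQ (H t h : ℝ) : ℝ :=
  (4 - 2 ^ (2*H)) * h ^ (2*H) - 2 ^ (2*H - 1) * (t + h) ^ (2*H) - 3 * 2 ^ (2*H) * t ^ (2*H)
    - 2 ^ (2*H - 1) * (t - h) ^ (2*H) + 2 * (2*t + h) ^ (2*H) + 2 * (2*t - h) ^ (2*H)

namespace SubfBmAux

lemma hasDerivAt_exp_mul (c x : ℝ) :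
    HasDerivAt (fun u => Real.exp (c * u)) (c * Real.exp (c * x)) x := by
  have h := ((hasDerivAt_id x).const_mul c).exp
  simpa [mul_comm] using h

noncomputable def FF (u : ℝ) : ℝ :=
  4 * Real.exp (Real.log 3 * u) - Real.exp (Real.log 4 * u) - 6 * Real.exp (Real.log 2 * u) + 4

noncomputable def FF' (u : ℝ) : ℝ :=
  4 * (Real.log 3 * Real.exp (Real.log 3 * u)) - Real.log 4 * Real.exp (Real.log 4 * u)
    - 6 * (Real.log 2 * Real.exp (Real.log 2 * u))

noncomputable def GG (u : ℝ) : ℝ :=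
  4 * Real.log 3 * Real.exp ((Real.log 3 - Real.log 2) * u)
    - Real.log 4 * Real.exp ((Real.log 4 - Real.log 2) * u) - 6 * Real.log 2

noncomputable def GG' (u : ℝ) : ℝ :=
  4 * Real.log 3 * ((Real.log 3 - Real.log 2) * Real.exp ((Real.log 3 - Real.log 2) * u))
    - Real.log 4 * ((Real.log 4 - Real.log 2) * Real.exp ((Real.log 4 - Real.log 2) * u))

lemma hasDerivAt_FF (x : ℝ) : HasDerivAt FF (FF' x) x := by
  unfold FF FF'
  exact ((((hasDerivAt_exp_mul (Real.log 3) x).const_mul 4).sub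
    (hasDerivAt_exp_mul (Real.log 4) x)).sub
    ((hasDerivAt_exp_mul (Real.log 2) x).const_mul 6)).add_const 4

lemma hasDerivAt_GG (x : ℝ) : HasDerivAt GG (GG' x) x := by
  unfold GG GG'
  exact (((hasDerivAt_exp_mul (Real.log 3 - Real.log 2) x).const_mul (4 * Real.log 3)).sub
    ((hasDerivAt_exp_mul (Real.log 4 - Real.log 2) x).const_mul (Real.log 4))).sub_const
    (6 * Real.log 2)

lemma GG_of_FF' {x : ℝ} (h : FF' x = 0) : GG x = 0 := by
  have k : ∀ a : ℝ, Real.exp ((a - Real.log 2) * x)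
      = Real.exp (a * x) * Real.exp (-(Real.log 2 * x)) := by
    intro a; rw [← Real.exp_add]; congr 1; ring
  have e2 : Real.exp (Real.log 2 * x) * Real.exp (-(Real.log 2 * x)) = 1 := by
    rw [← Real.exp_add]; simp
  have key : GG x = FF' x * Real.exp (-(Real.log 2 * x)) := by
    unfold GG FF'
    rw [k (Real.log 3), k (Real.log 4)]
    linear_combination ((6 : ℝ) * Real.log 2) * e2
  rw [key, h, zero_mul]

lemma FF_no_four_zeros {a b c d : ℝ} (hab : a < b) (hbc : b < c) (hcd : c < d)
    (ha : FF a = 0) (hb : FF b = 0) (hc : FF c = 0) (hd : FF d = 0) : False := by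
  have hcont : ∀ s t : ℝ, ContinuousOn FF (Icc s t) := fun s t x _ =>
    (hasDerivAt_FF x).continuousAt.continuousWithinAt
  obtain ⟨p, hp, hp0⟩ := exists_hasDerivAt_eq_zero hab (hcont a b) (ha.trans hb.symm)
    fun x _ => hasDerivAt_FF x
  obtain ⟨q, hq, hq0⟩ := exists_hasDerivAt_eq_zero hbc (hcont b c) (hb.trans hc.symm)
    fun x _ => hasDerivAt_FF x
  obtain ⟨r, hr, hr0⟩ := exists_hasDerivAt_eq_zero hcd (hcont c d) (hc.trans hd.symm)
    fun x _ => hasDerivAt_FF x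
  have hpq : p < q := lt_trans hp.2 hq.1
  have hqr : q < r := lt_trans hq.2 hr.1
  have gp : GG p = 0 := GG_of_FF' hp0
  have gq : GG q = 0 := GG_of_FF' hq0
  have gr : GG r = 0 := GG_of_FF' hr0
  have hcontG : ∀ s t : ℝ, ContinuousOn GG (Icc s t) := fun s t x _ =>
    (hasDerivAt_GG x).continuousAt.continuousWithinAt
  obtain ⟨s1, hs1, hs10⟩ := exists_hasDerivAt_eq_zero hpq (hcontG p q) (gp.trans gq.symm)
    fun x _ => hasDerivAt_GG x
  obtain ⟨s2, hs2, hs20⟩ := exists_hasDerivAt_eq_zero hqr (hcontG q r) (gq.trans gr.symm)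
    fun x _ => hasDerivAt_GG x
  have hs12 : s1 < s2 := lt_trans hs1.2 hs2.1
  have l2pos : 0 < Real.log 2 := Real.log_pos one_lt_two
  have l32 : Real.log 2 < Real.log 3 := Real.log_lt_log (by norm_num) (by norm_num)
  have l34 : Real.log 3 < Real.log 4 := Real.log_lt_log (by norm_num) (by norm_num)
  have hA : (0:ℝ) < 4 * Real.log 3 * (Real.log 3 - Real.log 2) := by nlinarith
  have e1 : 4 * Real.log 3 * (Real.log 3 - Real.log 2)
        * Real.exp ((Real.log 3 - Real.log 2) * s1)
      = Real.log 4 * (Real.log 4 - Real.log 2) * Real.exp ((Real.log 4 - Real.log 2) * s1) := by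
    unfold GG' at hs10; linear_combination hs10
  have e2 : 4 * Real.log 3 * (Real.log 3 - Real.log 2)
        * Real.exp ((Real.log 3 - Real.log 2) * s2)
      = Real.log 4 * (Real.log 4 - Real.log 2) * Real.exp ((Real.log 4 - Real.log 2) * s2) := by
    unfold GG' at hs20; linear_combination hs20
  have key : Real.exp ((Real.log 3 - Real.log 2) * s1) * Real.exp ((Real.log 4 - Real.log 2) * s2)
      = Real.exp ((Real.log 3 - Real.log 2) * s2)
        * Real.exp ((Real.log 4 - Real.log 2) * s1) := by
    apply mul_left_cancel₀ (ne_of_gt hA)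
    linear_combination Real.exp ((Real.log 4 - Real.log 2) * s2) * e1
      - Real.exp ((Real.log 4 - Real.log 2) * s1) * e2
  rw [← Real.exp_add, ← Real.exp_add] at key
  have heq := Real.exp_injective key
  nlinarith [heq, sub_pos.2 l34, sub_pos.2 hs12]

lemma expln (a : ℝ) (ha : 0 < a) (n : ℕ) : Real.exp (Real.log a * n) = a ^ n := by
  rw [mul_comm, ← Real.log_pow, Real.exp_log (pow_pos ha n)]

lemma FF_nat (n : ℕ) : FF n = 4 * 3 ^ n - 4 ^ n - 6 * 2 ^ n + 4 := by
  unfold FF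
  rw [expln 3 (by norm_num), expln 4 (by norm_num), expln 2 (by norm_num)]

lemma FF_one : FF 1 = 0 := by have := FF_nat 1; norm_num at this; linarith [this]
lemma FF_two : FF 2 = 0 := by have := FF_nat 2; norm_num at this; linarith [this]
lemma FF_three : FF 3 = 0 := by have := FF_nat 3; norm_num at this; linarith [this]

lemma FF_ne_zero {u : ℝ} (h0 : 0 < u) (h2 : u < 2) (h1 : u ≠ 1) : FF u ≠ 0 := by
  intro hu
  rcases lt_or_gt_of_ne h1 with hlt | hgt
  · exact FF_no_four_zeros hlt one_lt_two (by norm_num) hu FF_one FF_two FF_three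
  · exact FF_no_four_zeros hgt h2 (by norm_num) FF_one hu FF_two FF_three

lemma key_ne {u : ℝ} (h0 : 0 < u) (h2 : u < 2) (h1 : u ≠ 1) :
    -((2:ℝ) ^ (u - 1) * 2 ^ u) - 3 * 2 ^ u + 2 * 3 ^ u + 2 ≠ 0 := by
  have hF := FF_ne_zero h0 h2 h1
  have e3 : (3:ℝ) ^ u = Real.exp (Real.log 3 * u) := Real.rpow_def_of_pos (by norm_num) u
  have e2 : (2:ℝ) ^ u = Real.exp (Real.log 2 * u) := Real.rpow_def_of_pos (by norm_num) u
  have e4 : Real.exp (Real.log 4 * u) = (2:ℝ) ^ u * 2 ^ u := by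
    rw [← Real.rpow_def_of_pos (by norm_num : (0:ℝ) < 4) u, show (4:ℝ) = 2 * 2 by norm_num,
      Real.mul_rpow (by norm_num) (by norm_num)]
  have es : (2:ℝ) ^ (u - 1) = 2 ^ u / 2 := by
    rw [Real.rpow_sub two_pos, Real.rpow_one]
  intro hc
  apply hF
  unfold FF
  rw [← e3, ← e2, e4]
  rw [es] at hc
  linear_combination 2 * hc

end SubfBmAux

namespace SubfBmAux2
open scoped NNReal

lemma rpow_subadd {a b p : ℝ} (ha : 0 ≤ a) (hb : 0 ≤ b) (hp : 0 ≤ p) (hp1 : p ≤ 1) :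
    (a + b) ^ p ≤ a ^ p + b ^ p := by
  have h := NNReal.rpow_add_le_add_rpow (⟨a, ha⟩ : ℝ≥0) ⟨b, hb⟩ hp hp1
  exact_mod_cast h

lemma sd_low (u a h : ℝ) (hu : 0 < u) (hu1 : u ≤ 1) (hh : 0 < h) (hha : h ≤ a) :
    |(a + h) ^ u + (a - h) ^ u - 2 * a ^ u| ≤ h ^ u := by
  have ha0 : (0:ℝ) ≤ a := by linarith
  have h1 : (a + h) ^ u ≤ a ^ u + h ^ u := rpow_subadd ha0 hh.le hu.le hu1
  have h2 : a ^ u ≤ (a - h) ^ u + h ^ u := by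
    have e : a = (a - h) + h := by ring
    calc a ^ u = ((a - h) + h) ^ u := by rw [← e]
      _ ≤ (a - h) ^ u + h ^ u := rpow_subadd (by linarith) hh.le hu.le hu1
  have h3 : (a - h) ^ u ≤ a ^ u := Real.rpow_le_rpow (by linarith) (by linarith) hu.le
  have h4 : a ^ u ≤ (a + h) ^ u := Real.rpow_le_rpow ha0 (by linarith) hu.le
  rw [abs_le]; constructor <;> linarith

lemma sd_high (u a h : ℝ) (hu1 : 1 ≤ u) (hu2 : u ≤ 2) (hh : 0 < h) (hha : h ≤ a) :
    |(a + h) ^ u + (a - h) ^ u - 2 * a ^ u| ≤ 9 * h ^ u := by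
  have ha : 0 < a := lt_of_lt_of_le hh hha
  have hwpos : 0 < a ^ u := Real.rpow_pos_of_pos ha u
  have hvw : a ^ u ≤ (a + h) ^ u := Real.rpow_le_rpow ha.le (by linarith) (by linarith)
  have hvpos : 0 < (a + h) ^ u := lt_of_lt_of_le hwpos hvw
  have hhu : 0 < h ^ u := Real.rpow_pos_of_pos hh u
  have hconv := (convexOn_rpow hu1).2 (show a + h ∈ Ici (0:ℝ) by simp only [mem_Ici]; linarith)
    (show a - h ∈ Ici (0:ℝ) by simp only [mem_Ici]; linarith)
    (by norm_num : (0:ℝ) ≤ 1/2) (by norm_num : (0:ℝ) ≤ 1/2) (by norm_num)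
  simp only [smul_eq_mul] at hconv
  rw [show (1/2:ℝ) * (a + h) + (1/2) * (a - h) = a by ring] at hconv
  have hlow : 0 ≤ (a + h) ^ u + (a - h) ^ u - 2 * a ^ u := by linarith
  have key1 : (a - h) ^ u ≤ a ^ u * a ^ u / (a + h) ^ u := by
    have k0 : a - h ≤ a * a / (a + h) := by
      rw [le_div_iff₀ (by linarith : (0:ℝ) < a + h)]; nlinarith
    calc (a - h) ^ u ≤ (a * a / (a + h)) ^ u :=
          Real.rpow_le_rpow (by linarith) k0 (by linarith)
      _ = a ^ u * a ^ u / (a + h) ^ u := by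
          rw [Real.div_rpow (by positivity) (by linarith), Real.mul_rpow ha.le ha.le]
  have hs : h / a ≤ 1 := (div_le_one ha).2 hha
  have hs0 : 0 ≤ h / a := by positivity
  have key2 : (a + h) ^ u - a ^ u ≤ 3 * a ^ u * (h / a) := by
    have e0 : a + h = a * (1 + h / a) := by field_simp
    have hv2 : (a + h) ^ u = a ^ u * (1 + h / a) ^ u := by
      rw [e0, Real.mul_rpow ha.le (by positivity)]
    have e1 : (1 + h / a) ^ u ≤ (1 + h / a) ^ (2:ℝ) :=
      Real.rpow_le_rpow_of_exponent_le (le_add_of_nonneg_right hs0) hu2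
    rw [Real.rpow_two] at e1
    nlinarith [hwpos, hv2, e1, hs, hs0]
  set d : ℝ := (a + h) ^ u - a ^ u with hd
  have hd0 : 0 ≤ d := by simp only [hd]; linarith
  have q1 : (a + h) ^ u + a ^ u * a ^ u / (a + h) ^ u - 2 * a ^ u = d ^ 2 / (a + h) ^ u := by
    field_simp [hd]; ring
  have q2 : d ^ 2 / (a + h) ^ u ≤ d ^ 2 / a ^ u := by
    rw [div_le_div_iff₀ hvpos hwpos]
    nlinarith [sq_nonneg d, hvw, hwpos]
  have q4 : d ^ 2 / a ^ u ≤ 9 * a ^ u * (h / a) ^ 2 := by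
    rw [div_le_iff₀ hwpos]
    nlinarith [hd0, key2, hwpos]
  have q5 : 9 * a ^ u * (h / a) ^ 2 ≤ 9 * h ^ u := by
    have hq : (a / h) ^ u ≤ (a / h) ^ (2:ℝ) :=
      Real.rpow_le_rpow_of_exponent_le ((one_le_div hh).2 hha) hu2
    rw [Real.div_rpow ha.le hh.le, Real.div_rpow ha.le hh.le, Real.rpow_two, Real.rpow_two] at hq
    have h2p : (0:ℝ) < h ^ 2 := by positivity
    have cross : a ^ u * h ^ 2 ≤ a ^ 2 * h ^ u := by
      rw [div_le_div_iff₀ hhu h2p] at hq; linarith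
    have ea : 9 * a ^ u * (h / a) ^ 2 = 9 * (a ^ u * h ^ 2) / a ^ 2 := by
      field_simp
    rw [ea, div_le_iff₀ (by positivity : (0:ℝ) < a ^ 2)]
    nlinarith [cross]
  rw [abs_of_nonneg hlow]
  linarith [key1, q1, q2, q4, q5]

lemma sd_bound (u a h : ℝ) (hu : 0 < u) (hu2 : u ≤ 2) (hh : 0 < h) (hha : h ≤ a) :
    |(a + h) ^ u + (a - h) ^ u - 2 * a ^ u| ≤ 9 * h ^ u := by
  have hhu : 0 < h ^ u := Real.rpow_pos_of_pos hh u
  rcases le_or_gt u 1 with h1 | h1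
  · linarith [sd_low u a h hu h1 hh hha]
  · exact sd_high u a h h1.le hu2 hh hha

lemma value_at_diag (H : ℝ) (hH0 : 0 < H) {h : ℝ} (hh : 0 < h) :
    subfBmQ H h h / h ^ (2*H) - (4 - 2 ^ (2*H))
      = -((2:ℝ) ^ (2*H - 1) * 2 ^ (2*H)) - 3 * 2 ^ (2*H) + 2 * 3 ^ (2*H) + 2 := by
  have h2H : (2*H) ≠ 0 := by positivity
  have hpow : (0:ℝ) < h ^ (2*H) := Real.rpow_pos_of_pos hh _
  unfold subfBmQ
  rw [show h + h = 2*h by ring, show h - h = (0:ℝ) by ring, show 2*h + h = 3*h by ring,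
    show 2*h - h = h by ring,
    Real.mul_rpow (by norm_num : (0:ℝ) ≤ 2) hh.le,
    Real.mul_rpow (by norm_num : (0:ℝ) ≤ 3) hh.le, Real.zero_rpow h2H]
  field_simp
  ring

lemma ratio_bound (H : ℝ) (hH0 : 0 < H) (hH1 : H < 1) {t h : ℝ} (hh : 0 < h) (hht : h ≤ t) :
    |subfBmQ H t h / h ^ (2*H) - (4 - 2 ^ (2*H))| ≤ 40 := by
  set u : ℝ := 2*H with hu
  have hu0 : 0 < u := by simp only [hu]; linarith
  have hu2 : u ≤ 2 := by simp only [hu]; linarith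
  have ht : 0 < t := lt_of_lt_of_le hh hht
  have hhu : 0 < h ^ u := Real.rpow_pos_of_pos hh u
  have hA : |(t + h) ^ u + (t - h) ^ u - 2 * t ^ u| ≤ 9 * h ^ u :=
    sd_bound u t h hu0 hu2 hh hht
  have hB : |(2*t + h) ^ u + (2*t - h) ^ u - 2 * (2*t) ^ u| ≤ 9 * h ^ u :=
    sd_bound u (2*t) h hu0 hu2 hh (by linarith)
  have e2t : (2*t) ^ u = 2 ^ u * t ^ u := Real.mul_rpow (by norm_num) ht.le
  have e2u : 2 * (2:ℝ) ^ (u - 1) = 2 ^ u := by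
    calc 2 * (2:ℝ) ^ (u - 1) = 2 ^ (1:ℝ) * 2 ^ (u - 1) := by rw [Real.rpow_one]
      _ = 2 ^ (1 + (u - 1)) := (Real.rpow_add two_pos _ _).symm
      _ = 2 ^ u := by ring_nf
  have hid : subfBmQ H t h - (4 - 2 ^ u) * h ^ u
      = 2 * ((2*t + h) ^ u + (2*t - h) ^ u - 2 * ((2*t) ^ u))
        - 2 ^ (u - 1) * ((t + h) ^ u + (t - h) ^ u - 2 * t ^ u) := by
    unfold subfBmQ
    rw [← hu, e2t]
    linear_combination (-(t ^ u)) * e2u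
  have hc1 : (2:ℝ) ^ (u - 1) ≤ 2 := by
    calc (2:ℝ) ^ (u - 1) ≤ 2 ^ (1:ℝ) :=
        Real.rpow_le_rpow_of_exponent_le one_le_two (by linarith)
      _ = 2 := Real.rpow_one 2
  have hc0 : (0:ℝ) ≤ 2 ^ (u - 1) := le_of_lt (Real.rpow_pos_of_pos two_pos _)
  have hN : |subfBmQ H t h - (4 - 2 ^ u) * h ^ u| ≤ 36 * h ^ u := by
    rw [hid]
    calc |2 * ((2*t + h) ^ u + (2*t - h) ^ u - 2 * ((2*t) ^ u))
          - 2 ^ (u - 1) * ((t + h) ^ u + (t - h) ^ u - 2 * t ^ u)|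
        ≤ |2 * ((2*t + h) ^ u + (2*t - h) ^ u - 2 * ((2*t) ^ u))|
          + |2 ^ (u - 1) * ((t + h) ^ u + (t - h) ^ u - 2 * t ^ u)| := abs_sub _ _
      _ = 2 * |(2*t + h) ^ u + (2*t - h) ^ u - 2 * ((2*t) ^ u)|
          + 2 ^ (u - 1) * |(t + h) ^ u + (t - h) ^ u - 2 * t ^ u| := by
          rw [abs_mul, abs_mul, abs_of_nonneg (by norm_num : (0:ℝ) ≤ 2), abs_of_nonneg hc0]
      _ ≤ 36 * h ^ u := by
          have hABle : (2:ℝ) ^ (u-1) * |(t + h) ^ u + (t - h) ^ u - 2 * t ^ u|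
              ≤ 2 * (9 * h ^ u) := mul_le_mul hc1 hA (abs_nonneg _) (by norm_num)
          linarith [hB, hABle]
  have hrw : subfBmQ H t h / h ^ u - (4 - 2 ^ u)
      = (subfBmQ H t h - (4 - 2 ^ u) * h ^ u) / h ^ u := by
    rw [eq_div_iff hhu.ne', sub_mul, div_mul_cancel₀ _ hhu.ne']
  rw [hrw, abs_div, abs_of_pos hhu, div_le_iff₀ hhu]
  linarith [hN, hhu]

end SubfBmAux2



/-- For sub-fractional Brownian motion with `H ≠ 1/2`, the sup over
`t ∈ [h, T−h]` of `|Q(t,h)/h^{2H} − (4 − 2^{2H})|` does not tend to `0` as `h ↓ 0`;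
indeed its liminf is positive. -/
theorem subfBm_second_diff_cutoff_necessary (H T : ℝ) (hH : H ∈ Set.Ioo (0:ℝ) 1)
    (hH' : H ≠ 1/2) (hT : 0 < T) :
    0 < liminf (fun h => ⨆ t ∈ Icc h (T - h), |subfBmQ H t h / h ^ (2*H) - (4 - 2 ^ (2*H))|)
          (nhdsWithin 0 (Ioi 0))
    ∧ ¬ Tendsto (fun h => ⨆ t ∈ Icc h (T - h), |subfBmQ H t h / h ^ (2*H) - (4 - 2 ^ (2*H))|)
          (nhdsWithin 0 (Ioi 0)) (nhds 0) := by
  obtain ⟨hH0, hH1⟩ := hH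
  have hcne : -((2:ℝ) ^ (2*H - 1) * 2 ^ (2*H)) - 3 * 2 ^ (2*H) + 2 * 3 ^ (2*H) + 2 ≠ 0 :=
    SubfBmAux.key_ne (by linarith) (by linarith)
      (fun h => hH' (by linarith))
  set c : ℝ := -((2:ℝ) ^ (2*H - 1) * 2 ^ (2*H)) - 3 * 2 ^ (2*H) + 2 * 3 ^ (2*H) + 2 with hc
  have hcpos : 0 < |c| := abs_pos.2 hcne
  have hmem : Ioo (0:ℝ) (T/2) ∈ nhdsWithin (0:ℝ) (Ioi 0) :=
    Ioo_mem_nhdsGT_of_mem ⟨le_refl 0, by linarith⟩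
  have hub : ∀ᶠ h in nhdsWithin (0:ℝ) (Ioi 0),
      (⨆ t ∈ Icc h (T - h), |subfBmQ H t h / h ^ (2*H) - (4 - 2 ^ (2*H))|) ≤ 40 := by
    filter_upwards [hmem] with h hh
    refine Real.iSup_le (fun t => Real.iSup_le (fun ht => ?_) (by norm_num)) (by norm_num)
    exact SubfBmAux2.ratio_bound H hH0 hH1 hh.1 ht.1
  have hlb : ∀ᶠ h in nhdsWithin (0:ℝ) (Ioi 0),
      |c| ≤ ⨆ t ∈ Icc h (T - h), |subfBmQ H t h / h ^ (2*H) - (4 - 2 ^ (2*H))| := by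
    filter_upwards [hmem] with h hh
    have hh0 : 0 < h := hh.1
    have hmem' : h ∈ Icc h (T - h) := ⟨le_refl h, by linarith [hh.2]⟩
    have hc1 : Continuous fun x : ℝ => x ^ (2*H) :=
      Real.continuous_rpow_const (by linarith)
    have hQc : Continuous fun t => subfBmQ H t h := by
      unfold subfBmQ
      exact ((((continuous_const.sub (continuous_const.mul
        (hc1.comp (continuous_id.add continuous_const)))).sub
        (continuous_const.mul hc1)).sub (continuous_const.mul
        (hc1.comp (continuous_id.sub continuous_const)))).add (continuous_const.mul
        (hc1.comp ((continuous_const.mul continuous_id).add continuous_const)))).add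
        (continuous_const.mul
        (hc1.comp ((continuous_const.mul continuous_id).sub continuous_const)))
    have hbdd : BddAbove ((fun t => |subfBmQ H t h / h ^ (2*H) - (4 - 2 ^ (2*H))|) ''
        Icc h (T - h)) :=
      IsCompact.bddAbove_image isCompact_Icc
        (((hQc.div_const _).sub continuous_const).abs.continuousOn)
    have hle := le_ciSup_set hbdd hmem'
    have hbdd' : BddAbove (Set.range fun i : (Icc h (T - h)) =>
        |subfBmQ H i h / h ^ (2*H) - (4 - 2 ^ (2*H))|) := by
      obtain ⟨M, hM⟩ := hbdd
      refine ⟨M, ?_⟩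
      rintro y ⟨i, rfl⟩
      exact hM ⟨i, i.2, rfl⟩
    have hf' : sSup (∅ : Set ℝ) ≤ ⨆ i : (Icc h (T - h)),
        |subfBmQ H i h / h ^ (2*H) - (4 - 2 ^ (2*H))| := by
      rw [Real.sSup_empty]; exact le_trans (abs_nonneg _) hle
    have hval : |subfBmQ H h h / h ^ (2*H) - (4 - 2 ^ (2*H))| = |c| := by
      rw [SubfBmAux2.value_at_diag H hH0 hh0, hc]
    rw [hval] at hle
    rw [← ciSup_subtype'' hbdd' hf']
    exact hle
  have hcob : IsCoboundedUnder (· ≥ ·) (nhdsWithin (0:ℝ) (Ioi 0))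
      (fun h => ⨆ t ∈ Icc h (T - h), |subfBmQ H t h / h ^ (2*H) - (4 - 2 ^ (2*H))|) :=
    isCoboundedUnder_ge_of_eventually_le _ hub
  constructor
  · exact lt_of_lt_of_le hcpos (le_liminf_of_le hcob hlb)
  · intro hTend
    have h1 := hTend.eventually_lt_const hcpos
    obtain ⟨h, hle, hlt⟩ := (hlb.and h1).exists
    linarith
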